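/- Fix p > 1, n ∈ ℕ, and a block decomposition k of {1, …, n}. For every λ > 0, the maximum translative superball packing density is bounded below by the asymptotic expected packing density of the hard superball model on superballs: Δ_{p,k}(n) ≥ limsup_{R→∞} α_{B^n_{p,k}(R)}(λ). -/

import Mathlib

open MeasureTheory Filter
open scoped BigOperators ENNReal

/-- The superball norm on `ℝ^n` associated to exponent `p` and a block decomposition
given by `m` blocks with endpoints `k 0 = 0 < k 1 < ⋯ < k m = n`:
`‖x‖ = (∑_{j<m} ‖(x_{k j}, …, x_{k (j+1) - 1})‖₂^p)^(1/p)`. -/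
noncomputable def superNorm (p : ℝ) {n : ℕ} (m : ℕ) (k : ℕ → ℕ) (x : Fin n → ℝ) : ℝ :=
  (∑ j ∈ Finset.range m,
      (Real.sqrt (∑ i : Fin n, if k j ≤ (i : ℕ) ∧ (i : ℕ) < k (j + 1) then x i ^ 2 else 0)) ^ p)
    ^ (1 / p)

/-- `k` is a block decomposition of `{1, …, n}` into `m` blocks. -/
def IsBlockDecomp (n m : ℕ) (k : ℕ → ℕ) : Prop :=
  0 < m ∧ k 0 = 0 ∧ k m = n ∧ ∀ j < m, k j < k (j + 1)

/-- The superball with center `c` and radius `r`. -/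
noncomputable def superBall (p : ℝ) {n : ℕ} (m : ℕ) (k : ℕ → ℕ) (c : Fin n → ℝ) (r : ℝ) :
    Set (Fin n → ℝ) :=
  {y | superNorm p m k (y - c) ≤ r}

/-- `P` is the set of centers of a translative packing of superballs of radius `r`. -/
def IsSuperballPacking (p : ℝ) {n : ℕ} (m : ℕ) (k : ℕ → ℕ) (r : ℝ)
    (P : Set (Fin n → ℝ)) : Prop :=
  ∀ x ∈ P, ∀ y ∈ P, x ≠ y → 2 * r ≤ superNorm p m k (x - y)

/-- The translative packing density of superballs of radius `r` in `ℝ^n`. -/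
noncomputable def packingDensity (p : ℝ) (n m : ℕ) (k : ℕ → ℕ) (r : ℝ) : ℝ :=
  limsup (fun R : ℝ =>
      ⨆ P : {P : Set (Fin n → ℝ) // IsSuperballPacking p m k r P},
        (volume ((⋃ x ∈ P.1, superBall p m k x r) ∩ superBall p m k 0 R)).toReal /
          (volume (superBall p m k (0 : Fin n → ℝ) R)).toReal) atTop

/-- The canonical hard superball model partition function `Ẑ_S(t)`. -/
noncomputable def Zhat (p : ℝ) {n : ℕ} (m : ℕ) (k : ℕ → ℕ) (r : ℝ) (S : Set (Fin n → ℝ))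
    (t : ℕ) : ℝ :=
  ((t.factorial : ℝ))⁻¹ *
    ∫ x : Fin t → Fin n → ℝ in Set.univ.pi fun _ => S,
      Set.indicator
        {y : Fin t → Fin n → ℝ | ∀ i j : Fin t, i ≠ j → 2 * r ≤ superNorm p m k (y i - y j)}
        (fun _ => (1 : ℝ)) x

/-- The grand canonical hard superball model partition function `Z_S(λ)`. -/
noncomputable def Zgc (p : ℝ) {n : ℕ} (m : ℕ) (k : ℕ → ℕ) (r : ℝ) (S : Set (Fin n → ℝ))
    (lam : ℝ) : ℝ :=
  ∑' t : ℕ, lam ^ t * Zhat p m k r S t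

/-- The expected packing density `α_S(λ)` of the hard superball model. -/
noncomputable def alphaDen (p : ℝ) {n : ℕ} (m : ℕ) (k : ℕ → ℕ) (r : ℝ) (S : Set (Fin n → ℝ))
    (lam : ℝ) : ℝ :=
  lam * deriv (Zgc p m k r S) lam / ((volume S).toReal * Zgc p m k r S lam)


open scoped Pointwise

namespace SuperAux
variable {n : ℕ} {p : ℝ} {m : ℕ} {k : ℕ → ℕ}

noncomputable def sblk (k : ℕ → ℕ) (x : Fin n → ℝ) (j : ℕ) : ℝ :=
  Real.sqrt (∑ i : Fin n, if k j ≤ (i : ℕ) ∧ (i : ℕ) < k (j + 1) then x i ^ 2 else 0)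

lemma sblk_nonneg (x : Fin n → ℝ) (j : ℕ) : 0 ≤ sblk k x j := Real.sqrt_nonneg _

lemma superNorm_def (x : Fin n → ℝ) :
    superNorm p m k x = (∑ j ∈ Finset.range m, sblk k x j ^ p) ^ (1 / p) := rfl

lemma sblk_eq_norm (x : Fin n → ℝ) (j : ℕ) :
    sblk k x j = ‖(WithLp.equiv 2 (Fin n → ℝ)).symm
      (fun i => if k j ≤ (i : ℕ) ∧ (i : ℕ) < k (j + 1) then x i else 0)‖ := by
  rw [EuclideanSpace.norm_eq, sblk]
  congr 1
  refine Finset.sum_congr rfl fun i _ => ?_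
  rw [WithLp.equiv_symm_apply]
  by_cases h : k j ≤ (i : ℕ) ∧ (i : ℕ) < k (j + 1) <;> simp [h, sq_abs]

lemma sblk_add_le (x y : Fin n → ℝ) (j : ℕ) :
    sblk k (x + y) j ≤ sblk k x j + sblk k y j := by
  rw [sblk_eq_norm, sblk_eq_norm, sblk_eq_norm]
  have h : (WithLp.equiv 2 (Fin n → ℝ)).symm
        (fun i => if k j ≤ (i : ℕ) ∧ (i : ℕ) < k (j + 1) then (x + y) i else 0) =
      (WithLp.equiv 2 (Fin n → ℝ)).symm
        (fun i => if k j ≤ (i : ℕ) ∧ (i : ℕ) < k (j + 1) then x i else 0) +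
      (WithLp.equiv 2 (Fin n → ℝ)).symm
        (fun i => if k j ≤ (i : ℕ) ∧ (i : ℕ) < k (j + 1) then y i else 0) := by
    ext i
    by_cases h : k j ≤ (i : ℕ) ∧ (i : ℕ) < k (j + 1) <;>
      simp [WithLp.equiv_symm_apply, h]
  rw [h]
  exact norm_add_le _ _

lemma sblk_smul {a : ℝ} (ha : 0 ≤ a) (x : Fin n → ℝ) (j : ℕ) :
    sblk k (a • x) j = a * sblk k x j := by
  rw [sblk, sblk]
  have h : ∀ i : Fin n, (if k j ≤ (i : ℕ) ∧ (i : ℕ) < k (j + 1) then (a • x) i ^ 2 else 0) =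
      a ^ 2 * (if k j ≤ (i : ℕ) ∧ (i : ℕ) < k (j + 1) then x i ^ 2 else 0) := by
    intro i
    by_cases h : k j ≤ (i : ℕ) ∧ (i : ℕ) < k (j + 1) <;> simp [h, mul_pow]
  rw [Finset.sum_congr rfl fun i _ => h i, ← Finset.mul_sum,
    Real.sqrt_mul (sq_nonneg a), Real.sqrt_sq ha]

lemma sblk_neg (x : Fin n → ℝ) (j : ℕ) : sblk k (-x) j = sblk k x j := by
  rw [sblk, sblk]
  congr 1
  exact Finset.sum_congr rfl fun i _ => by simp

variable (p m k) in
lemma superNorm_nonneg (x : Fin n → ℝ) : 0 ≤ superNorm p m k x :=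
  Real.rpow_nonneg
    (Finset.sum_nonneg fun j _ => Real.rpow_nonneg (sblk_nonneg x j) p) _

lemma superNorm_neg (x : Fin n → ℝ) : superNorm p m k (-x) = superNorm p m k x := by
  rw [superNorm_def, superNorm_def]
  congr 1
  exact Finset.sum_congr rfl fun j _ => by rw [sblk_neg]

lemma superNorm_zero (hp : p ≠ 0) : superNorm p m k (0 : Fin n → ℝ) = 0 := by
  rw [superNorm_def]
  have h : ∀ j ∈ Finset.range m, sblk k (0 : Fin n → ℝ) j ^ p = 0 := by
    intro j _
    have : sblk k (0 : Fin n → ℝ) j = 0 := by simp [sblk]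
    rw [this, Real.zero_rpow hp]
  rw [Finset.sum_congr rfl h, Finset.sum_const_zero,
    Real.zero_rpow (by simpa using hp)]

lemma superNorm_smul (hp : 0 < p) {a : ℝ} (ha : 0 ≤ a) (x : Fin n → ℝ) :
    superNorm p m k (a • x) = a * superNorm p m k x := by
  rw [superNorm_def, superNorm_def]
  have h : ∀ j ∈ Finset.range m, sblk k (a • x) j ^ p = a ^ p * sblk k x j ^ p := by
    intro j _
    rw [sblk_smul ha, Real.mul_rpow ha (sblk_nonneg x j)]
  rw [Finset.sum_congr rfl h, ← Finset.mul_sum,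
    Real.mul_rpow (Real.rpow_nonneg ha p)
      (Finset.sum_nonneg fun j _ => Real.rpow_nonneg (sblk_nonneg x j) p),
    ← Real.rpow_mul ha, mul_one_div_cancel hp.ne', Real.rpow_one]

lemma superNorm_add_le (hp : 1 ≤ p) (x y : Fin n → ℝ) :
    superNorm p m k (x + y) ≤ superNorm p m k x + superNorm p m k y := by
  rw [superNorm_def, superNorm_def, superNorm_def]
  have hp0 : (0:ℝ) ≤ p := le_trans zero_le_one hp
  calc (∑ j ∈ Finset.range m, sblk k (x + y) j ^ p) ^ (1 / p)
      ≤ (∑ j ∈ Finset.range m, (sblk k x j + sblk k y j) ^ p) ^ (1 / p) := by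
        refine Real.rpow_le_rpow
          (Finset.sum_nonneg fun j _ => Real.rpow_nonneg (sblk_nonneg _ j) p)
          (Finset.sum_le_sum fun j _ =>
            Real.rpow_le_rpow (sblk_nonneg _ j) (sblk_add_le x y j) hp0)
          (by positivity)
    _ ≤ _ := Real.Lp_add_le_of_nonneg (hp := hp) (hf := fun j _ => sblk_nonneg x j)
          (hg := fun j _ => sblk_nonneg y j)

lemma superNorm_sub_le (hp : 1 ≤ p) (x y z : Fin n → ℝ) :
    superNorm p m k (x - z) ≤ superNorm p m k (x - y) + superNorm p m k (y - z) := by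
  have h : x - z = (x - y) + (y - z) := by abel
  rw [h]; exact superNorm_add_le hp _ _

lemma continuous_superNorm (hp : 0 < p) : Continuous (superNorm p m k : (Fin n → ℝ) → ℝ) := by
  have hrpow : ∀ q : ℝ, 0 < q → Continuous fun t : ℝ => t ^ q := fun q hq =>
    continuous_iff_continuousAt.2 fun t => Real.continuousAt_rpow_const _ _ (Or.inr hq.le)
  have hsum : Continuous fun x : Fin n → ℝ => ∑ j ∈ Finset.range m, sblk k x j ^ p := by
    refine continuous_finset_sum _ fun j _ => (hrpow p hp).comp ?_
    refine Real.continuous_sqrt.comp (continuous_finset_sum _ fun i _ => ?_)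
    by_cases h : k j ≤ (i : ℕ) ∧ (i : ℕ) < k (j + 1)
    · simp only [if_pos h]; exact (continuous_apply i).pow 2
    · simp only [if_neg h]; exact continuous_const
  exact (hrpow (1/p) (by positivity)).comp hsum



lemma exists_block (hk : IsBlockDecomp n m k) (i : Fin n) :
    ∃ j, j < m ∧ k j ≤ (i : ℕ) ∧ (i : ℕ) < k (j + 1) := by
  classical
  obtain ⟨hm, h0, hn, hlt⟩ := hk
  have hex : ∃ j, (i : ℕ) < k j := ⟨m, hn ▸ i.isLt⟩
  set j0 := Nat.find hex with hj0
  have hspec : (i : ℕ) < k j0 := Nat.find_spec hex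
  have hj0pos : 0 < j0 := by
    rcases Nat.eq_zero_or_pos j0 with h | h
    · rw [h] at hspec; omega
    · exact h
  have hj0m : j0 ≤ m := Nat.find_le (hn ▸ i.isLt)
  refine ⟨j0 - 1, by omega, ?_, ?_⟩
  · have := Nat.find_min hex (m := j0 - 1) (by omega)
    omega
  · have h1 : j0 - 1 + 1 = j0 := by omega
    rw [h1]; exact hspec

lemma abs_le_superNorm (hp : 1 ≤ p) (hk : IsBlockDecomp n m k) (x : Fin n → ℝ) (i : Fin n) :
    |x i| ≤ superNorm p m k x := by
  obtain ⟨j, hjm, hj1, hj2⟩ := exists_block hk i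
  have hp0 : (0:ℝ) < p := lt_of_lt_of_le zero_lt_one hp
  have h1 : |x i| ≤ sblk k x j := by
    rw [← Real.sqrt_sq_eq_abs, sblk]
    refine Real.sqrt_le_sqrt ?_
    have := Finset.single_le_sum
      (f := fun i' : Fin n => if k j ≤ (i' : ℕ) ∧ (i' : ℕ) < k (j + 1) then x i' ^ 2 else 0)
      (fun i' _ => by positivity) (Finset.mem_univ i)
    simpa [hj1, hj2] using this
  have h2 : sblk k x j ≤ superNorm p m k x := by
    rw [superNorm_def]
    have h3 : sblk k x j ^ p ≤ ∑ j' ∈ Finset.range m, sblk k x j' ^ p :=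
      Finset.single_le_sum (f := fun j' => sblk k x j' ^ p)
        (fun j' _ => Real.rpow_nonneg (sblk_nonneg x j') p) (Finset.mem_range.2 hjm)
    calc sblk k x j = (sblk k x j ^ p) ^ (1/p) := by
          rw [← Real.rpow_mul (sblk_nonneg x j), mul_one_div_cancel hp0.ne', Real.rpow_one]
      _ ≤ _ := Real.rpow_le_rpow (Real.rpow_nonneg (sblk_nonneg x j) p) h3 (by positivity)
  exact h1.trans h2

section Ball
variable (p m k)

lemma isClosed_superBall (hp : 0 < p) (c : Fin n → ℝ) (R : ℝ) :
    IsClosed (superBall p m k c R) := by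
  have : superBall p m k c R = (fun y => superNorm p m k (y - c)) ⁻¹' Set.Iic R := rfl
  rw [this]
  exact IsClosed.preimage ((continuous_superNorm hp).comp
    (continuous_id.sub continuous_const)) isClosed_Iic

lemma measurableSet_superBall (hp : 0 < p) (c : Fin n → ℝ) (R : ℝ) :
    MeasurableSet (superBall p m k c R) :=
  (isClosed_superBall p m k hp c R).measurableSet

lemma isOpen_superOpenBall (hp : 0 < p) (c : Fin n → ℝ) (R : ℝ) :
    IsOpen {z : Fin n → ℝ | superNorm p m k (z - c) < R} := by
  have : {z : Fin n → ℝ | superNorm p m k (z - c) < R}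
      = (fun y => superNorm p m k (y - c)) ⁻¹' Set.Iio R := rfl
  rw [this]
  exact IsOpen.preimage ((continuous_superNorm hp).comp
    (continuous_id.sub continuous_const)) isOpen_Iio

lemma superBall_subset_box (hp : 1 ≤ p) (hk : IsBlockDecomp n m k) (R : ℝ) :
    superBall p m k (0 : Fin n → ℝ) R ⊆ Set.univ.pi fun _ => Set.Icc (-R) R := by
  intro y hy
  have hy' : superNorm p m k y ≤ R := by simpa [superBall] using hy
  intro i _
  have := (abs_le_superNorm hp hk y i).trans hy'
  exact abs_le.1 this

lemma volume_superBall_lt_top (hp : 1 < p) (hk : IsBlockDecomp n m k) (R : ℝ) :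
    volume (superBall p m k (0 : Fin n → ℝ) R) < ⊤ := by
  refine lt_of_le_of_lt (measure_mono (superBall_subset_box p m k hp.le hk R)) ?_
  rw [volume_pi_pi]
  exact ENNReal.prod_lt_top fun i _ => by
    rw [Real.volume_Icc]; exact ENNReal.ofReal_lt_top

lemma smul_superBall (hp : 0 < p) {a : ℝ} (ha : 0 < a) (R : ℝ) :
    a • superBall p m k (0 : Fin n → ℝ) R = superBall p m k (0 : Fin n → ℝ) (a * R) := by
  ext z
  rw [Set.mem_smul_set_iff_inv_smul_mem₀ ha.ne']
  simp only [superBall, Set.mem_setOf_eq, sub_zero]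
  rw [superNorm_smul hp (inv_nonneg.mpr ha.le)]
  constructor
  · intro h
    have h2 := mul_le_mul_of_nonneg_left h ha.le
    rwa [← mul_assoc, mul_inv_cancel₀ ha.ne', one_mul] at h2
  · intro h
    have h2 := mul_le_mul_of_nonneg_left h (inv_nonneg.mpr ha.le)
    rwa [← mul_assoc, inv_mul_cancel₀ ha.ne', one_mul] at h2
end Ball


section Vol
variable (p m k)

lemma volume_superBall_eq (hp : 0 < p) {r R : ℝ} (hr : 0 < r) (hR : 0 < R)
    (hvol : volume (superBall p m k (0 : Fin n → ℝ) r) = 1) :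
    volume (superBall p m k (0 : Fin n → ℝ) R) = ENNReal.ofReal ((R / r) ^ n) := by
  have h1 : superBall p m k (0 : Fin n → ℝ) R
      = (R / r) • superBall p m k (0 : Fin n → ℝ) r := by
    rw [smul_superBall p m k hp (by positivity), div_mul_cancel₀ _ hr.ne']
  rw [h1, Measure.addHaar_smul_of_nonneg volume (by positivity), hvol, mul_one]
  congr 1
  rw [Module.finrank_fin_fun]

lemma volume_superBall_toReal (hp : 0 < p) {r R : ℝ} (hr : 0 < r) (hR : 0 < R)
    (hvol : volume (superBall p m k (0 : Fin n → ℝ) r) = 1) :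
    (volume (superBall p m k (0 : Fin n → ℝ) R)).toReal = (R / r) ^ n := by
  rw [volume_superBall_eq p m k hp hr hR hvol, ENNReal.toReal_ofReal (by positivity)]

lemma convex_superBall (hp : 1 ≤ p) (R : ℝ) :
    Convex ℝ (superBall p m k (0 : Fin n → ℝ) R) := by
  intro x hx y hy a b ha hb hab
  have hp0 : 0 < p := lt_of_lt_of_le zero_lt_one hp
  simp only [superBall, Set.mem_setOf_eq, sub_zero] at hx hy ⊢
  calc superNorm p m k (a • x + b • y)
      ≤ superNorm p m k (a • x) + superNorm p m k (b • y) := superNorm_add_le hp _ _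
    _ = a * superNorm p m k x + b * superNorm p m k y := by
        rw [superNorm_smul hp0 ha, superNorm_smul hp0 hb]
    _ ≤ a * R + b * R := by
        exact add_le_add (mul_le_mul_of_nonneg_left hx ha) (mul_le_mul_of_nonneg_left hy hb)
    _ = R := by rw [← add_mul, hab, one_mul]

lemma volume_sphere_zero (hp : 1 ≤ p) {R : ℝ} (hR : 0 < R) :
    volume {z : Fin n → ℝ | superNorm p m k z = R} = 0 := by
  have hp0 : 0 < p := lt_of_lt_of_le zero_lt_one hp
  have hsub : {z : Fin n → ℝ | superNorm p m k z = R}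
      ⊆ frontier (superBall p m k (0 : Fin n → ℝ) R) := by
    intro z hz
    have hz' : superNorm p m k z = R := hz
    have hmemB : z ∈ superBall p m k (0 : Fin n → ℝ) R := by
      simp only [superBall, Set.mem_setOf_eq, sub_zero]; exact hz'.le
    rw [(isClosed_superBall p m k hp0 0 R).frontier_eq]
    refine ⟨hmemB, fun hint => ?_⟩
    have hcont : Continuous fun c : ℝ => c • z := continuous_id.smul continuous_const
    have hev : ∀ᶠ c in nhds (1:ℝ), c • z ∈ interior (superBall p m k (0 : Fin n → ℝ) R) := by
      have := (isOpen_interior.mem_nhds (by simpa using hint))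
      exact hcont.continuousAt.eventually_mem (by simpa using this)
    have hev2 : ∀ᶠ c in nhdsWithin (1:ℝ) (Set.Ioi 1),
        c • z ∈ interior (superBall p m k (0 : Fin n → ℝ) R) :=
      hev.filter_mono nhdsWithin_le_nhds
    obtain ⟨c, hcB, hc1⟩ := (hev2.and (eventually_mem_nhdsWithin)).exists
    have hcball : superNorm p m k (c • z) ≤ R :=
      by simpa [superBall, sub_zero] using interior_subset hcB
    rw [superNorm_smul hp0 (le_of_lt (lt_trans zero_lt_one hc1)), hz'] at hcball
    have hc1' : (1:ℝ) < c := hc1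
    nlinarith
  exact measure_mono_null hsub ((convex_superBall p m k hp R).addHaar_frontier volume)

lemma volume_open_superBall (hp : 1 ≤ p) {r : ℝ} (hr : 0 < r)
    (hvol : volume (superBall p m k (0 : Fin n → ℝ) r) = 1) :
    volume {z : Fin n → ℝ | superNorm p m k z < r} = 1 := by
  have hsub1 : {z : Fin n → ℝ | superNorm p m k z < r}
      ⊆ superBall p m k (0 : Fin n → ℝ) r := by
    intro z hz; simp only [superBall, Set.mem_setOf_eq, sub_zero]; exact le_of_lt hz
  have hsub2 : superBall p m k (0 : Fin n → ℝ) r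
      ⊆ {z : Fin n → ℝ | superNorm p m k z < r} ∪ {z : Fin n → ℝ | superNorm p m k z = r} := by
    intro z hz
    have : superNorm p m k z ≤ r := by simpa [superBall, sub_zero] using hz
    rcases lt_or_eq_of_le this with h | h
    · exact Or.inl h
    · exact Or.inr h
  refine le_antisymm ?_ ?_
  · rw [← hvol]; exact measure_mono hsub1
  · calc (1:ℝ≥0∞) = volume (superBall p m k (0 : Fin n → ℝ) r) := hvol.symm
      _ ≤ volume ({z : Fin n → ℝ | superNorm p m k z < r}
            ∪ {z : Fin n → ℝ | superNorm p m k z = r}) := measure_mono hsub2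
      _ ≤ volume {z : Fin n → ℝ | superNorm p m k z < r}
            + volume {z : Fin n → ℝ | superNorm p m k z = r} := measure_union_le _ _
      _ = volume {z : Fin n → ℝ | superNorm p m k z < r} := by
          rw [volume_sphere_zero p m k hp hr, add_zero]

lemma volume_open_superBall_center (hp : 1 ≤ p) {r : ℝ} (hr : 0 < r)
    (hvol : volume (superBall p m k (0 : Fin n → ℝ) r) = 1) (c : Fin n → ℝ) :
    volume {z : Fin n → ℝ | superNorm p m k (z - c) < r} = 1 := by
  have h1 : {z : Fin n → ℝ | superNorm p m k (z - c) < r}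
      = (fun z => z + -c) ⁻¹' {z : Fin n → ℝ | superNorm p m k z < r} := by
    ext z; simp [sub_eq_add_neg]
  rw [h1, measure_preimage_add_right]
  exact volume_open_superBall p m k hp hr hvol

end Vol


noncomputable def supRatio (p : ℝ) (n m : ℕ) (k : ℕ → ℕ) (r R : ℝ) : ℝ :=
  ⨆ P : {P : Set (Fin n → ℝ) // IsSuperballPacking p m k r P},
    (volume ((⋃ x ∈ P.1, superBall p m k x r) ∩ superBall p m k 0 R)).toReal /
      (volume (superBall p m k (0 : Fin n → ℝ) R)).toReal

lemma packingDensity_eq (p : ℝ) (n m : ℕ) (k : ℕ → ℕ) (r : ℝ) :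
    packingDensity p n m k r = limsup (fun R => supRatio p n m k r R) atTop := rfl

lemma empty_packing (p : ℝ) {n : ℕ} (m : ℕ) (k : ℕ → ℕ) (r : ℝ) :
    IsSuperballPacking p m k r (∅ : Set (Fin n → ℝ)) := fun x hx => absurd hx (by simp)

instance packing_nonempty (p : ℝ) {n : ℕ} (m : ℕ) (k : ℕ → ℕ) (r : ℝ) :
    Nonempty {P : Set (Fin n → ℝ) // IsSuperballPacking p m k r P} :=
  ⟨⟨∅, empty_packing p m k r⟩⟩

lemma supRatio_nonneg (p : ℝ) (n m : ℕ) (k : ℕ → ℕ) (r R : ℝ) :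
    0 ≤ supRatio p n m k r R :=
  Real.iSup_nonneg fun P => by positivity

lemma ratio_le_one {p : ℝ} {n m : ℕ} {k : ℕ → ℕ} {R : ℝ} (hp : 1 < p)
    (hk : IsBlockDecomp n m k) (U : Set (Fin n → ℝ)) :
    (volume (U ∩ superBall p m k 0 R)).toReal /
      (volume (superBall p m k (0 : Fin n → ℝ) R)).toReal ≤ 1 := by
  have hfin : volume (superBall p m k (0 : Fin n → ℝ) R) ≠ ⊤ :=
    (volume_superBall_lt_top p m k hp hk R).ne
  rcases eq_or_ne ((volume (superBall p m k (0 : Fin n → ℝ) R)).toReal) 0 with h | h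
  · rw [h, div_zero]; exact zero_le_one
  · refine div_le_one_of_le₀ ?_ (ENNReal.toReal_nonneg)
    exact ENNReal.toReal_mono hfin (measure_mono Set.inter_subset_right)

lemma supRatio_le_one {p : ℝ} {n m : ℕ} {k : ℕ → ℕ} {r : ℝ} (hp : 1 < p)
    (hk : IsBlockDecomp n m k) (R : ℝ) : supRatio p n m k r R ≤ 1 :=
  Real.iSup_le (fun P => ratio_le_one hp hk _) zero_le_one

lemma bddAbove_ratio {p : ℝ} {n m : ℕ} {k : ℕ → ℕ} {r R : ℝ} (hp : 1 < p)
    (hk : IsBlockDecomp n m k) :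
    BddAbove (Set.range fun P : {P : Set (Fin n → ℝ) // IsSuperballPacking p m k r P} =>
      (volume ((⋃ x ∈ P.1, superBall p m k x r) ∩ superBall p m k 0 R)).toReal /
        (volume (superBall p m k (0 : Fin n → ℝ) R)).toReal) :=
  ⟨1, by rintro _ ⟨P, rfl⟩; exact ratio_le_one hp hk _⟩

/-- Core counting estimate. -/
lemma count_le {p : ℝ} {n m : ℕ} {k : ℕ → ℕ} {r : ℝ} (hp : 1 < p)
    (hk : IsBlockDecomp n m k) (hr : 0 < r)
    (hvol : volume (superBall p m k (0 : Fin n → ℝ) r) = 1)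
    {R : ℝ} (hR : 0 < R) {t : ℕ} (y : Fin t → Fin n → ℝ)
    (hy : ∀ i, y i ∈ superBall p m k (0 : Fin n → ℝ) R)
    (hsep : ∀ i j : Fin t, i ≠ j → 2 * r ≤ superNorm p m k (y i - y j)) :
    (t : ℝ) ≤ (volume (superBall p m k (0 : Fin n → ℝ) (R + r))).toReal *
      supRatio p n m k r (R + r) := by
  classical
  have hp0 : 0 < p := lt_trans zero_lt_one hp
  have hinj : Function.Injective y := by
    intro i j hij
    by_contra hne
    have h := hsep i j hne
    rw [hij, sub_self, superNorm_zero hp0.ne'] at h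
    linarith
  set P : Set (Fin n → ℝ) := Set.range y with hP
  have hPack : IsSuperballPacking p m k r P := by
    rintro _ ⟨i, rfl⟩ _ ⟨j, rfl⟩ hne
    exact hsep i j (fun h => hne (by rw [h]))
  set U : Set (Fin n → ℝ) := ⋃ x ∈ P, superBall p m k x r with hU
  set B : Set (Fin n → ℝ) := superBall p m k (0 : Fin n → ℝ) (R + r) with hB
  have hUB : U ⊆ B := by
    rintro z hz
    simp only [hU, Set.mem_iUnion] at hz
    obtain ⟨x, ⟨i, rfl⟩, hzx⟩ := hz
    have h1 : superNorm p m k (z - y i) ≤ r := hzx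
    have h2 : superNorm p m k (y i - 0) ≤ R := hy i
    have h7 := superNorm_sub_le (p := p) (m := m) (k := k) hp.le z (y i) 0
    show superNorm p m k (z - 0) ≤ R + r
    linarith
  set O : Fin t → Set (Fin n → ℝ) := fun i => {z | superNorm p m k (z - y i) < r} with hO
  have hOU : ∀ i, O i ⊆ U := by
    intro i z hz
    simp only [hU, Set.mem_iUnion]
    exact ⟨y i, ⟨i, rfl⟩, show superNorm p m k (z - y i) ≤ r from le_of_lt hz⟩
  have hdisj : Pairwise (Function.onFun Disjoint O) := by
    intro i j hij
    rw [Function.onFun, Set.disjoint_left]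
    intro z hzi hzj
    have h1 : superNorm p m k (z - y i) < r := hzi
    have h2 : superNorm p m k (z - y j) < r := hzj
    have h3 := superNorm_sub_le (p := p) (m := m) (k := k) hp.le (y i) z (y j)
    have h4 : superNorm p m k (y i - z) = superNorm p m k (z - y i) := by
      rw [← superNorm_neg (p := p) (m := m) (k := k) (z - y i), neg_sub]
    have h5 := hsep i j hij
    rw [h4] at h3
    linarith
  have hOmeas : ∀ i, MeasurableSet (O i) :=
    fun i => (isOpen_superOpenBall p m k hp0 (y i) r).measurableSet
  have hvolO : ∀ i, volume (O i) = 1 :=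
    fun i => volume_open_superBall_center p m k hp.le hr hvol (y i)
  have hBfin : volume B ≠ ⊤ := (volume_superBall_lt_top p m k hp hk (R + r)).ne
  have h1 : (t : ℝ≥0∞) ≤ volume (U ∩ B) := by
    rw [Set.inter_eq_left.mpr hUB]
    calc (t : ℝ≥0∞) = ∑ i : Fin t, volume (O i) := by simp [hvolO]
      _ = volume (⋃ i, O i) := by
          rw [measure_iUnion hdisj hOmeas, tsum_fintype]
      _ ≤ volume U := measure_mono (Set.iUnion_subset hOU)
  have hUBfin : volume (U ∩ B) ≠ ⊤ :=
    (lt_of_le_of_lt (measure_mono Set.inter_subset_right) hBfin.lt_top).ne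
  have h2 : (t : ℝ) ≤ (volume (U ∩ B)).toReal := by
    have := ENNReal.toReal_mono hUBfin h1
    simpa using this
  have hd : 0 < (volume B).toReal := by
    rw [hB, volume_superBall_toReal p m k hp0 hr (by linarith) hvol]
    positivity
  have h4 := le_ciSup (bddAbove_ratio (r := r) (R := R + r) hp hk)
    (⟨P, hPack⟩ : {P : Set (Fin n → ℝ) // IsSuperballPacking p m k r P})
  have h3 : (t : ℝ) / (volume B).toReal ≤ supRatio p n m k r (R + r) := by
    have hle : (t : ℝ) / (volume B).toReal ≤
        (volume (U ∩ B)).toReal / (volume B).toReal := by gcongr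
    refine hle.trans ?_
    rw [hU, hB]
    simpa [supRatio] using h4
  have h5 := (div_le_iff₀ hd).mp h3
  calc (t : ℝ) ≤ supRatio p n m k r (R + r) * (volume B).toReal := h5
    _ = (volume B).toReal * supRatio p n m k r (R + r) := mul_comm _ _


lemma Zhat_nonneg (p : ℝ) {n : ℕ} (m : ℕ) (k : ℕ → ℕ) (r : ℝ) {S : Set (Fin n → ℝ)}
    (hS : MeasurableSet S) (t : ℕ) : 0 ≤ Zhat p m k r S t := by
  refine mul_nonneg (by positivity) ?_
  refine setIntegral_nonneg (MeasurableSet.univ_pi fun _ => hS) fun x _ => ?_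
  exact Set.indicator_nonneg (fun _ _ => zero_le_one) x

lemma Zhat_zero (p : ℝ) {n : ℕ} (m : ℕ) (k : ℕ → ℕ) (r : ℝ) (S : Set (Fin n → ℝ)) :
    Zhat p m k r S 0 = 1 := by
  rw [Zhat]
  have h1 : {y : Fin 0 → Fin n → ℝ | ∀ i j : Fin 0, i ≠ j → 2 * r ≤ superNorm p m k (y i - y j)}
      = Set.univ := Set.eq_univ_iff_forall.2 fun y i => i.elim0
  have h2 : (Set.univ.pi fun _ : Fin 0 => S) = Set.univ := by
    ext y; simp
  rw [h1, h2, Set.indicator_univ, Measure.restrict_univ, integral_const]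
  have h3 : (volume : Measure (Fin 0 → Fin n → ℝ)) Set.univ = 1 := by
    rw [MeasureTheory.volume_pi, Measure.pi_univ]
    simp
  rw [measureReal_def, h3]
  simp

lemma Zhat_eq_zero (p : ℝ) {n : ℕ} (m : ℕ) (k : ℕ → ℕ) (r : ℝ) {S : Set (Fin n → ℝ)}
    (hS : MeasurableSet S) (t : ℕ)
    (h : ¬ ∃ y : Fin t → Fin n → ℝ, (∀ i, y i ∈ S) ∧
      ∀ i j : Fin t, i ≠ j → 2 * r ≤ superNorm p m k (y i - y j)) :
    Zhat p m k r S t = 0 := by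
  rw [Zhat]
  rw [setIntegral_congr_fun (g := fun _ => (0:ℝ)) (MeasurableSet.univ_pi fun _ => hS) ?_,
    integral_zero, mul_zero]
  intro x hx
  refine Set.indicator_of_notMem ?_ _
  intro hxC
  exact h ⟨x, fun i => hx i (Set.mem_univ i), hxC⟩

lemma alpha_nonneg_and_le {p : ℝ} {n m : ℕ} {k : ℕ → ℕ} {r : ℝ} (hp : 1 < p)
    (hk : IsBlockDecomp n m k) (hr : 0 < r)
    (hvol : volume (superBall p m k (0 : Fin n → ℝ) r) = 1) {lam : ℝ} (hlam : 0 < lam)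
    {R : ℝ} (hR : 0 < R) :
    0 ≤ alphaDen p m k r (superBall p m k (0 : Fin n → ℝ) R) lam ∧
    alphaDen p m k r (superBall p m k (0 : Fin n → ℝ) R) lam ≤
      (volume (superBall p m k (0 : Fin n → ℝ) (R + r))).toReal * supRatio p n m k r (R + r)
        / (volume (superBall p m k (0 : Fin n → ℝ) R)).toReal := by
  classical
  have hp0 : 0 < p := lt_trans zero_lt_one hp
  set S := superBall p m k (0 : Fin n → ℝ) R with hS
  have hSmeas : MeasurableSet S := measurableSet_superBall p m k hp0 0 R
  set T : ℝ := (volume (superBall p m k (0 : Fin n → ℝ) (R + r))).toReal *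
    supRatio p n m k r (R + r) with hT
  have hT0 : 0 ≤ T :=
    mul_nonneg ENNReal.toReal_nonneg (supRatio_nonneg p n m k r (R + r))
  have key : ∀ t : ℕ, Zhat p m k r S t ≠ 0 → (t : ℝ) ≤ T := by
    intro t hZ
    by_contra hgt
    refine hZ (Zhat_eq_zero p m k r hSmeas t ?_)
    rintro ⟨y, hy, hsep⟩
    exact hgt (count_le hp hk hr hvol hR y hy hsep)
  set N : ℕ := ⌈T⌉₊ with hN
  have hvanish : ∀ t : ℕ, t ∉ Finset.range (N + 1) → Zhat p m k r S t = 0 := by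
    intro t ht
    by_contra hne
    have h1 := key t hne
    have h2 : (t : ℝ) ≤ (N : ℝ) := h1.trans (Nat.le_ceil T)
    have h3 : t ≤ N := by exact_mod_cast h2
    exact ht (Finset.mem_range.2 (by omega))
  have hfun : Zgc p m k r S = fun mu : ℝ =>
      ∑ t ∈ Finset.range (N + 1), mu ^ t * Zhat p m k r S t := by
    funext mu
    exact tsum_eq_sum fun t ht => by rw [hvanish t ht, mul_zero]
  have hZnn : ∀ t, 0 ≤ Zhat p m k r S t := fun t => Zhat_nonneg p m k r hSmeas t
  have hderiv : deriv (Zgc p m k r S) lam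
      = ∑ t ∈ Finset.range (N + 1), ((t : ℝ) * lam ^ (t - 1)) * Zhat p m k r S t := by
    rw [hfun, deriv_fun_sum fun t _ => (differentiableAt_pow t).mul_const _]
    refine Finset.sum_congr rfl fun t _ => ?_
    rw [deriv_mul_const (differentiableAt_pow t), deriv_pow_field]
  have hZ1 : 1 ≤ Zgc p m k r S lam := by
    rw [hfun]
    have h0 : lam ^ 0 * Zhat p m k r S 0 = 1 := by rw [pow_zero, one_mul, Zhat_zero]
    calc (1 : ℝ) = lam ^ 0 * Zhat p m k r S 0 := h0.symm
      _ ≤ ∑ t ∈ Finset.range (N + 1), lam ^ t * Zhat p m k r S t :=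
        Finset.single_le_sum (f := fun t => lam ^ t * Zhat p m k r S t)
          (fun t _ => mul_nonneg (by positivity) (hZnn t)) (Finset.mem_range.2 (by omega))
  have hZpos : 0 < Zgc p m k r S lam := lt_of_lt_of_le zero_lt_one hZ1
  have hderiv_nn : 0 ≤ deriv (Zgc p m k r S) lam := by
    rw [hderiv]
    refine Finset.sum_nonneg fun t _ => ?_
    have : (0:ℝ) ≤ (t : ℝ) * lam ^ (t - 1) := by positivity
    exact mul_nonneg this (hZnn t)
  have hnum : lam * deriv (Zgc p m k r S) lam ≤ T * Zgc p m k r S lam := by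
    rw [hderiv, hfun, Finset.mul_sum, Finset.mul_sum]
    refine Finset.sum_le_sum fun t _ => ?_
    rcases eq_or_ne (Zhat p m k r S t) 0 with h | h
    · rw [h]; simp
    · have ht := key t h
      rcases t with _ | s
      · simp only [Nat.cast_zero, zero_mul, mul_zero, pow_zero, one_mul]
        exact mul_nonneg hT0 (hZnn 0)
      · have e1 : lam * ((((s + 1 : ℕ) : ℝ)) * lam ^ (s + 1 - 1) * Zhat p m k r S (s + 1))
            = ((s + 1 : ℕ) : ℝ) * (lam ^ (s + 1) * Zhat p m k r S (s + 1)) := by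
          have hs : s + 1 - 1 = s := rfl
          rw [hs, pow_succ]
          ring
        rw [e1]
        have hnn : (0:ℝ) ≤ lam ^ (s + 1) * Zhat p m k r S (s + 1) :=
          mul_nonneg (by positivity) (hZnn (s + 1))
        exact mul_le_mul_of_nonneg_right ht hnn
  have hvS : 0 < (volume S).toReal := by
    rw [hS, volume_superBall_toReal p m k hp0 hr hR hvol]
    positivity
  constructor
  · simp only [alphaDen]
    exact div_nonneg (mul_nonneg hlam.le hderiv_nn)
      (mul_nonneg ENNReal.toReal_nonneg hZpos.le)
  · simp only [alphaDen]
    have hden : 0 < (volume S).toReal * Zgc p m k r S lam := mul_pos hvS hZpos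
    calc lam * deriv (Zgc p m k r S) lam / ((volume S).toReal * Zgc p m k r S lam)
        ≤ (T * Zgc p m k r S lam) / ((volume S).toReal * Zgc p m k r S lam) :=
          (div_le_div_iff_of_pos_right hden).mpr hnum
      _ = T / (volume S).toReal := by
          rw [mul_comm (volume S).toReal (Zgc p m k r S lam)]
          rw [mul_comm T (Zgc p m k r S lam)]
          rw [mul_div_mul_left _ _ hZpos.ne']
      _ = _ := by rw [hT, hS]

end SuperAux

/-- **Lemma 4 (hard superball model lower-bounds the packing density).**
For `p > 1`, a block decomposition `k` of `{1, …, n}`, the unit-volume radius `r`, and any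
fugacity `λ > 0`, the asymptotic expected packing density of the hard superball model on
the superballs `B^n_{p,k}(R)` is a lower bound on the maximum packing density:
`Δ_{p,k}(n) ≥ limsup_{R→∞} α_{B^n_{p,k}(R)}(λ)`. -/
theorem packingDensity_ge_limsup_alpha (p : ℝ) (hp : 1 < p) (n m : ℕ) (k : ℕ → ℕ)
    (hk : IsBlockDecomp n m k) (r : ℝ) (hr : 0 < r)
    (hvol : volume (superBall p m k (0 : Fin n → ℝ) r) = 1)
    (lam : ℝ) (hlam : 0 < lam) :
    limsup (fun R : ℝ => alphaDen p m k r (superBall p m k (0 : Fin n → ℝ) R) lam) atTop ≤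
      packingDensity p n m k r := by
  classical
  have hp0 : 0 < p := lt_trans zero_lt_one hp
  set f : ℝ → ℝ := fun R => alphaDen p m k r (superBall p m k (0 : Fin n → ℝ) R) lam with hf
  set G : ℝ → ℝ := fun R => SuperAux.supRatio p n m k r R with hG
  have hpd : packingDensity p n m k r = limsup G atTop := rfl
  have hG1 : ∀ R, G R ≤ 1 := fun R => SuperAux.supRatio_le_one hp hk R
  have hG0 : ∀ R, 0 ≤ G R := fun R => SuperAux.supRatio_nonneg p n m k r R
  -- eventual bound
  have hbound : ∀ᶠ R in atTop, 0 ≤ f R ∧ f R ≤ G (R + r) + (((R + r) / R) ^ n - 1) := by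
    filter_upwards [eventually_gt_atTop (0:ℝ)] with R hR
    obtain ⟨h0, h1⟩ := SuperAux.alpha_nonneg_and_le hp hk hr hvol hlam hR
    refine ⟨h0, ?_⟩
    have hv1 : (volume (superBall p m k (0 : Fin n → ℝ) (R + r))).toReal = ((R + r) / r) ^ n :=
      SuperAux.volume_superBall_toReal p m k hp0 hr (by linarith) hvol
    have hv2 : (volume (superBall p m k (0 : Fin n → ℝ) R)).toReal = (R / r) ^ n :=
      SuperAux.volume_superBall_toReal p m k hp0 hr hR hvol
    have hval : (volume (superBall p m k (0 : Fin n → ℝ) (R + r))).toReal *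
        SuperAux.supRatio p n m k r (R + r) /
        (volume (superBall p m k (0 : Fin n → ℝ) R)).toReal
        = ((R + r) / R) ^ n * G (R + r) := by
      have hR0 : R ≠ 0 := hR.ne'
      have hr0 : r ≠ 0 := hr.ne'
      have hpow : ((R + r) / r) ^ n / (R / r) ^ n = ((R + r) / R) ^ n := by
        rw [← div_pow]
        congr 1
        field_simp
      rw [hv1, hv2, mul_div_right_comm, hpow]
    rw [hval] at h1
    have hq1 : (1:ℝ) ≤ ((R + r) / R) ^ n := by
      refine one_le_pow₀ ?_
      rw [le_div_iff₀ hR]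
      linarith
    have hG1' := hG1 (R + r)
    have hG0' := hG0 (R + r)
    nlinarith
  -- tendsto of error term
  have hq : Tendsto (fun R : ℝ => ((R + r) / R) ^ n - 1) atTop (nhds 0) := by
    have h1 : Tendsto (fun R : ℝ => (R + r) / R) atTop (nhds 1) := by
      have h2 : (fun R : ℝ => (R + r) / R) =ᶠ[atTop] fun R => 1 + r / R := by
        filter_upwards [eventually_ne_atTop (0:ℝ)] with R hR
        field_simp
      rw [tendsto_congr' h2]
      have h3 : Tendsto (fun R : ℝ => r / R) atTop (nhds 0) :=
        Tendsto.div_atTop tendsto_const_nhds tendsto_id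
      simpa using (tendsto_const_nhds (x := (1:ℝ))).add h3
    have h4 : Tendsto (fun R : ℝ => ((R + r) / R) ^ n) atTop (nhds 1) := by
      have := h1.pow n
      simpa using this
    simpa using h4.sub (tendsto_const_nhds (x := (1:ℝ)))
  have hco : IsCoboundedUnder (· ≤ ·) atTop f :=
    isCoboundedUnder_le_of_eventually_le atTop (x := 0) (hbound.mono fun R h => h.1)
  have hDbd : IsBoundedUnder (· ≤ ·) atTop G := ⟨1, Filter.eventually_map.2
    (Filter.Eventually.of_forall hG1)⟩
  rw [hpd]
  refine le_of_forall_pos_le_add fun eps heps => ?_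
  have hlt : limsup G atTop < limsup G atTop + eps / 2 := by linarith
  have hev : ∀ᶠ R' in atTop, G R' < limsup G atTop + eps / 2 :=
    eventually_lt_of_limsup_lt hlt hDbd
  have hshift : Tendsto (fun R : ℝ => R + r) atTop atTop :=
    tendsto_atTop_add_const_right atTop r tendsto_id
  have hev2 : ∀ᶠ R in atTop, G (R + r) < limsup G atTop + eps / 2 := hshift.eventually hev
  have hev3 : ∀ᶠ R in atTop, ((R + r) / R) ^ n - 1 ≤ eps / 2 :=
    hq.eventually (eventually_le_nhds (by linarith))
  have hfin : ∀ᶠ R in atTop, f R ≤ limsup G atTop + eps := by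
    filter_upwards [hbound, hev2, hev3] with R h1 h2 h3
    have := h1.2
    linarith
  exact limsup_le_of_le hco hfin
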